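/- Let p_D and p_{D'} be the joint densities of n independent Laplace random variables with scale d = Δ/ε centered at f(D)_i and f(D')_i respectively, where ∑_{i=1}^n |f(D)_i - f(D')_i| ≤ Δ. Then for every point q ∈ ℝⁿ, p_D(q) ≤ e^ε · p_{D'}(q). -/
import Mathlib


theorem laplace_mechanism_density_ratio (n : ℕ) (ε Δ : ℝ) (hε : 0 < ε) (hΔ : 0 < Δ)
    (fD fD' : Fin n → ℝ)
    (hsens : ∑ i, |fD i - fD' i| ≤ Δ)
    (q : Fin n → ℝ) :
    (∏ i, (1 / (2 * (Δ / ε))) * Real.exp (-|q i - fD i| / (Δ / ε)))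
      ≤ Real.exp ε *
        ∏ i, (1 / (2 * (Δ / ε))) * Real.exp (-|q i - fD' i| / (Δ / ε)) := by
  have hd : 0 < Δ / ε := div_pos hΔ hε
  have hc : 0 < 1 / (2 * (Δ / ε)) := by positivity
  rw [Finset.prod_mul_distrib, Finset.prod_mul_distrib,
    ← Real.exp_sum, ← Real.exp_sum, mul_comm (Real.exp ε), mul_assoc,
    ← Real.exp_add]
  apply mul_le_mul_of_nonneg_left _ (le_of_lt (Finset.prod_pos (fun i _ => hc)))
  apply Real.exp_le_exp.mpr
  rw [← sub_le_iff_le_add', ← Finset.sum_sub_distrib]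
  have key : ∑ i, (-|q i - fD i| / (Δ / ε) - -|q i - fD' i| / (Δ / ε))
      ≤ ∑ i, |fD i - fD' i| / (Δ / ε) := by
    apply Finset.sum_le_sum
    intro i _
    rw [div_sub_div_same, div_le_div_iff_of_pos_right hd]
    have := abs_sub_abs_le_abs_sub (q i - fD' i) (q i - fD i)
    have h2 : q i - fD' i - (q i - fD i) = fD i - fD' i := by ring
    rw [h2] at this
    linarith
  refine key.trans ?_
  rw [← Finset.sum_div, div_le_iff₀ hd]
  calc ∑ i, |fD i - fD' i| ≤ Δ := hsens
    _ = ε * (Δ / ε) := by field_simp
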